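/- The Stone–Čech compactification βℕ of the natural numbers (with the discrete topology) is a W̃-space: every point of βℕ is a W̃-point. -/

import Mathlib

open Filter Set Topology


/-- `x` is a W̃-point: player I has a winning strategy in the game G̃(x), where player I
chooses arbitrary nonempty open sets and player II picks points in them; player I wins
when `x` is an accumulation point (cluster point) of the resulting sequence. -/
def IsWtildePoint {X : Type*} [TopologicalSpace X] (x : X) : Prop :=
  ∃ σ : List X → Set X,
    (∀ h : List X, IsOpen (σ h) ∧ (σ h).Nonempty) ∧
    ∀ p : ℕ → X,
      (∀ n : ℕ, p n ∈ σ (List.ofFn fun i : Fin n => p i)) →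
      MapClusterPt x atTop p

/-- Singletons of unit points are open in `StoneCech ℕ`. -/
lemma isOpen_singleton_stoneCechUnit (k : ℕ) :
    IsOpen ({stoneCechUnit k} : Set (StoneCech ℕ)) := by
  have hf : Continuous (fun n : ℕ => decide (n = k)) := continuous_of_discreteTopology
  set g := stoneCechExtend hf with hg
  have hgc : Continuous g := continuous_stoneCechExtend hf
  have hopen : IsOpen (g ⁻¹' {true}) := (isOpen_discrete _).preimage hgc
  have hext : ∀ n : ℕ, g (stoneCechUnit n) = decide (n = k) := fun n =>
    congrFun (stoneCechExtend_extends hf) n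
  have key : g ⁻¹' {true} = {stoneCechUnit k} := by
    apply Subset.antisymm
    · intro x hx
      have hx' : x ∈ closure (g ⁻¹' {true} ∩ range (stoneCechUnit : ℕ → StoneCech ℕ)) :=
        (denseRange_stoneCechUnit).open_subset_closure_inter hopen hx
      have hsub : g ⁻¹' {true} ∩ range (stoneCechUnit : ℕ → StoneCech ℕ)
          ⊆ {stoneCechUnit k} := by
        rintro y ⟨hy, n, rfl⟩
        have : decide (n = k) = true := by
          have := hext n; simp only [mem_preimage, mem_singleton_iff] at hy
          rw [← this, hy]
        have : n = k := of_decide_eq_true this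
        simp [this]
      have := closure_mono hsub hx'
      rwa [closure_singleton] at this
    · intro x hx
      simp only [mem_singleton_iff] at hx
      subst hx
      simp [mem_preimage, hext k]
  exact key ▸ hopen

/-- The Stone–Čech compactification of ℕ is a W̃-space. -/
theorem stoneCech_nat_is_wtilde_space :
    ∀ x : StoneCech ℕ, IsWtildePoint x := by
  intro x
  by_cases hx : x ∈ range (stoneCechUnit : ℕ → StoneCech ℕ)
  · obtain ⟨k, rfl⟩ := hx
    refine ⟨fun _ => {stoneCechUnit k}, fun h => ⟨isOpen_singleton_stoneCechUnit k, ⟨_, rfl⟩⟩,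
      fun p hp => ?_⟩
    have hpc : ∀ n, p n = stoneCechUnit k := fun n => hp n
    have : Tendsto p atTop (𝓝 (stoneCechUnit k)) := by
      rw [show p = fun _ => stoneCechUnit k from funext hpc]
      exact tendsto_const_nhds
    exact this.mapClusterPt
  · refine ⟨fun h => {stoneCechUnit h.length}, fun h =>
      ⟨isOpen_singleton_stoneCechUnit _, ⟨_, rfl⟩⟩, fun p hp => ?_⟩
    have hpn : ∀ n, p n = stoneCechUnit n := by
      intro n
      have := hp n
      simpa [List.length_ofFn] using this
    rw [mapClusterPt_iff_frequently]
    intro V hV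
    rw [frequently_atTop]
    intro N
    -- x ∈ closure {stoneCechUnit n | n ≥ N}
    have hdense : closure (range (stoneCechUnit : ℕ → StoneCech ℕ)) = univ :=
      denseRange_stoneCechUnit.closure_range
    have hsplit : range (stoneCechUnit : ℕ → StoneCech ℕ)
        = (stoneCechUnit '' {n | N ≤ n}) ∪ (stoneCechUnit '' {n | n < N}) := by
      ext y; constructor
      · rintro ⟨n, rfl⟩
        rcases le_or_gt N n with h | h
        · exact Or.inl ⟨n, h, rfl⟩
        · exact Or.inr ⟨n, h, rfl⟩
      · rintro (⟨n, _, rfl⟩ | ⟨n, _, rfl⟩) <;> exact ⟨n, rfl⟩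
    have hfin : (stoneCechUnit '' {n | n < N}).Finite :=
      (Set.finite_Iio N).image _
    have hx' : x ∈ closure (stoneCechUnit '' {n | N ≤ n}) := by
      have : x ∈ closure (stoneCechUnit '' {n | N ≤ n}) ∪ closure (stoneCechUnit '' {n | n < N}) := by
        rw [← closure_union, ← hsplit, hdense]; exact mem_univ x
      rcases this with h | h
      · exact h
      · rw [hfin.isClosed.closure_eq] at h
        exact absurd (by rcases h with ⟨n, _, rfl⟩; exact ⟨n, rfl⟩) hx
    obtain ⟨y, hyV, n, hn, rfl⟩ := mem_closure_iff_nhds.mp hx' V hV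
    exact ⟨n, hn, by rw [hpn n]; exact hyV⟩
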